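/- Let H ∈ (0,1), let A be a Borel subset of [0,1], and let f : [0,1] → ℝ^d be (H−ε)-Hölder continuous for every ε > 0 (i.e. for each ε ∈ (0,H) there exists K_ε ≥ 0 with ‖f(x)−f(y)‖_∞ ≤ K_ε |x−y|^{H−ε} for all x, y ∈ [0,1]). Then dim(A) = dim_{Ψ,H}(Gr_A(f)). -/

import Mathlib

open MeasureTheory ENNReal Set

noncomputable section

/-- The `H`-parabolic rectangle `[a, a+δ] × ∏_{j=1}^d [b_j, b_j + δ^H]`. -/
def parRect (d : ℕ) (H : ℝ) (a : ℝ) (b : Fin d → ℝ) (δ : ℝ) : Set (ℝ × (Fin d → ℝ)) :=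
  Set.Icc a (a + δ) ×ˢ Set.univ.pi fun j => Set.Icc (b j) (b j + δ ^ H)

/-- The `H`-parabolic `β`-dimensional Hausdorff content `Ψ_H^β(F)`:
the infimum of `Σ_j δ_j^β` over all countable covers of `F` by parabolic rectangles. -/
def parContent (d : ℕ) (H β : ℝ) (F : Set (ℝ × (Fin d → ℝ))) : ℝ≥0∞ :=
  ⨅ (r : ℕ → ℝ × (Fin d → ℝ) × ℝ) (_ : ∀ n, 0 < (r n).2.2)
    (_ : F ⊆ ⋃ n, parRect d H (r n).1 (r n).2.1 (r n).2.2),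
    ∑' n, ENNReal.ofReal ((r n).2.2 ^ β)

/-- The `H`-parabolic Hausdorff dimension `dim_{Ψ,H}(F) = inf {β : Ψ_H^β(F) = 0}`. -/
def parDim (d : ℕ) (H : ℝ) (F : Set (ℝ × (Fin d → ℝ))) : ℝ :=
  sInf {β : ℝ | 0 ≤ β ∧ parContent d H β F = 0}


lemma parContent_zero_exp (d : ℕ) (H : ℝ) (F : Set (ℝ × (Fin d → ℝ))) :
    parContent d H 0 F = ⊤ := by
  refine top_unique ?_
  refine le_iInf fun r => le_iInf fun _ => le_iInf fun _ => ?_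
  have : ∀ n : ℕ, ENNReal.ofReal ((r n).2.2 ^ (0:ℝ)) = 1 := by
    intro n; simp [Real.rpow_zero]
  rw [tsum_congr this]
  exact (ENNReal.tsum_const_eq_top_of_ne_zero one_ne_zero).ge

lemma aux_lower (d : ℕ) (H : ℝ) (A : Set ℝ) (f : ℝ → Fin d → ℝ) {β : ℝ}
    (hβ : 0 < β) (hc : parContent d H β ((fun t => (t, f t)) '' A) = 0) :
    dimH A ≤ ENNReal.ofReal β := by
  have hcoe : (ENNReal.ofReal β) = (β.toNNReal : ℝ≥0∞) := rfl
  rw [hcoe]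
  refine dimH_le_of_hausdorffMeasure_ne_top ?_
  suffices h0 : μH[(β.toNNReal : ℝ)] A = 0 by
    rw [Real.coe_toNNReal β hβ.le] at h0
    rw [Real.coe_toNNReal β hβ.le, h0]; exact ENNReal.zero_ne_top
  rw [Real.coe_toNNReal β hβ.le]
  have key : ∀ ε : ℝ≥0∞, 0 < ε → ε ≠ ⊤ → μH[β] A ≤ ε := by
    intro ε hε hεt
    rw [MeasureTheory.Measure.hausdorffMeasure_apply]
    refine iSup₂_le fun R hR => ?_
    set R' : ℝ≥0∞ := min R 1 with hR'def
    have hR'0 : 0 < R' := lt_min hR zero_lt_one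
    have hR't : R' ≠ ⊤ := (min_le_right _ _).trans_lt (by norm_num) |>.ne
    set c' : ℝ≥0∞ := min ε (R' ^ β) with hc'def
    have hc'0 : 0 < c' := lt_min hε (ENNReal.rpow_pos hR'0 hR't)
    have hc't : c' ≠ ⊤ := fun h => hεt (top_le_iff.mp (h ▸ min_le_left _ _))
    have hlt : parContent d H β ((fun t => (t, f t)) '' A) < c' := hc ▸ hc'0
    rw [parContent] at hlt
    obtain ⟨r0, h0⟩ := iInf_lt_iff.mp hlt
    have hpos : ∀ n, 0 < (r0 n).2.2 := by
      by_contra hp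
      rw [iInf_neg hp] at h0
      exact not_top_lt h0
    rw [iInf_pos hpos] at h0
    have hcov : ((fun t => (t, f t)) '' A) ⊆ ⋃ n, parRect d H (r0 n).1 (r0 n).2.1 (r0 n).2.2 := by
      by_contra hp
      rw [iInf_neg hp] at h0
      exact not_top_lt h0
    rw [iInf_pos hcov] at h0
    have hAcov : A ⊆ ⋃ n, Icc (r0 n).1 ((r0 n).1 + (r0 n).2.2) := by
      intro u hu
      obtain ⟨n, hn⟩ := mem_iUnion.mp (hcov ⟨u, hu, rfl⟩)
      exact mem_iUnion.mpr ⟨n, hn.1⟩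
    have hdiam : ∀ n, EMetric.diam (Icc (r0 n).1 ((r0 n).1 + (r0 n).2.2))
        = ENNReal.ofReal ((r0 n).2.2) := by
      intro n; rw [EMetric.diam, Real.ediam_Icc]; congr 1; ring
    have hterm : ∀ n, ENNReal.ofReal ((r0 n).2.2 ^ β) = (ENNReal.ofReal ((r0 n).2.2)) ^ β :=
      fun n => (ENNReal.ofReal_rpow_of_pos (hpos n)).symm
    have hsmall : ∀ n, ENNReal.ofReal ((r0 n).2.2) ≤ R := by
      intro n
      have h1 : (ENNReal.ofReal ((r0 n).2.2)) ^ β < R' ^ β := by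
        rw [← hterm n]
        exact lt_of_le_of_lt (ENNReal.le_tsum n) (h0.trans_le (min_le_right _ _))
      exact ((ENNReal.rpow_lt_rpow_iff hβ).mp h1).le.trans (min_le_left _ _)
    refine le_trans (b := ∑' n, ENNReal.ofReal ((r0 n).2.2 ^ β)) ?_ (h0.le.trans (min_le_left _ _))
    refine iInf₂_le_of_le (fun n => Icc (r0 n).1 ((r0 n).1 + (r0 n).2.2)) hAcov ?_
    refine iInf_le_of_le (fun n => (hdiam n).trans_le (hsmall n)) ?_
    refine ENNReal.tsum_le_tsum fun n => iSup_le fun _ => ?_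
    show EMetric.diam _ ^ β ≤ _; rw [hdiam n, ← hterm n]
  refine le_antisymm ?_ (zero_le)
  refine ENNReal.le_of_forall_pos_le_add fun ε hε _ => ?_
  simpa using key ε (by exact_mod_cast hε) (by simp)

lemma geo_aux (x : ℝ) (hx : 0 ≤ x) :
    ∑' (m : ℕ), ENNReal.ofReal (x * 2⁻¹ ^ m) ≤ ENNReal.ofReal (2 * x) := by
  have h2 : ENNReal.ofReal ((2:ℝ)⁻¹) = 2⁻¹ := by
    rw [ENNReal.ofReal_inv_of_pos two_pos]; norm_num
  calc ∑' (m : ℕ), ENNReal.ofReal (x * 2⁻¹ ^ m)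
      = ∑' (m : ℕ), ENNReal.ofReal x * (2⁻¹ : ℝ≥0∞) ^ m := by
        refine tsum_congr fun m => ?_
        rw [ENNReal.ofReal_mul hx, ENNReal.ofReal_pow (by norm_num), h2]
    _ = ENNReal.ofReal x * ∑' (m : ℕ), (2⁻¹ : ℝ≥0∞) ^ m := ENNReal.tsum_mul_left
    _ = ENNReal.ofReal x * 2 := by rw [ENNReal.tsum_geometric]; norm_num
    _ = ENNReal.ofReal (2 * x) := by
        rw [mul_comm (2:ℝ) x, ENNReal.ofReal_mul' (by norm_num : (0:ℝ) ≤ 2),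
          ENNReal.ofReal_ofNat]
    _ ≤ ENNReal.ofReal (2 * x) := le_rfl

set_option maxHeartbeats 1000000 in
lemma aux_upper (d : ℕ) (H : ℝ) (hH : H ∈ Set.Ioo (0:ℝ) 1)
    (A : Set ℝ) (hA : A ⊆ Set.Icc 0 1)
    (f : ℝ → Fin d → ℝ)
    (hf : ∀ ε ∈ Set.Ioo (0:ℝ) H, ∃ K : ℝ, 0 ≤ K ∧
      ∀ x ∈ Set.Icc (0:ℝ) 1, ∀ y ∈ Set.Icc (0:ℝ) 1, ‖f x - f y‖ ≤ K * |x - y| ^ (H - ε))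
    {β : ℝ} (hβ : (dimH A).toReal < β) (hfin : dimH A ≠ ⊤) :
    parContent d H β ((fun t => (t, f t)) '' A) = 0 := by
  classical
  set D := (dimH A).toReal with hDdef
  have hD0 : 0 ≤ D := ENNReal.toReal_nonneg
  set s : ℝ := (D + β)/2 with hsdef
  have hs1 : D < s := by simp only [hsdef]; linarith
  have hs2 : s < β := by simp only [hsdef]; linarith
  have hs0 : 0 < s := lt_of_le_of_lt hD0 hs1
  have hβ0 : 0 < β := lt_of_le_of_lt hD0 hβ
  set ε : ℝ := min (H/2) ((β - s)/(d+1)) with hεdef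
  have hε0 : 0 < ε := lt_min (by linarith [hH.1]) (div_pos (by linarith) (by positivity))
  have hεH : ε < H := lt_of_le_of_lt (min_le_left _ _) (by linarith [hH.1])
  have hdε : (d:ℝ) * ε ≤ β - s := by
    have h1 : ε ≤ (β - s)/(d+1) := min_le_right _ _
    have h2 : (0:ℝ) < (d:ℝ) + 1 := by positivity
    have h3 : (d:ℝ) * ε ≤ (d:ℝ) * ((β - s)/(d+1)) :=
      mul_le_mul_of_nonneg_left h1 (Nat.cast_nonneg d)
    have h4 : (d:ℝ) * ((β - s)/(d+1)) ≤ β - s := by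
      have hq : (d:ℝ)/(d+1) ≤ 1 := by rw [div_le_one h2]; linarith
      calc (d:ℝ) * ((β - s)/(d+1)) = (β - s) * ((d:ℝ)/(d+1)) := by ring
        _ ≤ (β - s) * 1 := mul_le_mul_of_nonneg_left hq (by linarith)
        _ = β - s := mul_one _
    linarith
  obtain ⟨K, hK0, hK⟩ := hf ε ⟨hε0, hεH⟩
  -- Hausdorff measure of A at exponent s is zero
  have hμ : μH[s] A = 0 := by
    have hlt : dimH A < ENNReal.ofReal s :=
      (ENNReal.lt_ofReal_iff_toReal_lt hfin).mpr hs1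
    have := hausdorffMeasure_of_dimH_lt (s := A) (d := s.toNNReal) hlt
    rwa [Real.coe_toNNReal s hs0.le] at this
  refine le_antisymm ?_ (zero_le)
  refine ENNReal.le_of_forall_pos_le_add fun c hc _ => ?_
  rw [zero_add]
  set cr : ℝ := (c : ℝ) with hcrdef
  have hcr0 : 0 < cr := by exact_mod_cast hc
  -- constants
  set C2 : ℝ := (2*K+1)^d with hC2def
  have hC2pos : 0 < C2 := by positivity
  set C : ℝ := C2 * 2 ^ s with hCdef
  have hCpos : 0 < C := by
    have : (0:ℝ) < (2:ℝ) ^ s := Real.rpow_pos_of_pos two_pos s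
    positivity
  -- extract a cover of A
  set c1 : ℝ≥0∞ := min (ENNReal.ofReal (cr/(4*C))) (ENNReal.ofReal ((2⁻¹:ℝ) ^ s)) with hc1def
  have hc10 : 0 < c1 := by
    refine lt_min ?_ ?_ <;> rw [ENNReal.ofReal_pos]
    · positivity
    · exact Real.rpow_pos_of_pos (by norm_num) s
  rw [Measure.hausdorffMeasure_apply] at hμ
  have h1 : (⨅ (t : ℕ → Set ℝ) (_ : A ⊆ ⋃ n, t n) (_ : ∀ n, EMetric.diam (t n) ≤ 1),
      ∑' n, ⨆ _ : (t n).Nonempty, EMetric.diam (t n) ^ s) = 0 := by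
    refine le_antisymm ?_ (zero_le)
    rw [← hμ]
    exact le_iSup₂ (f := fun (R : ℝ≥0∞) (_ : 0 < R) =>
      ⨅ (t : ℕ → Set ℝ) (_ : A ⊆ ⋃ n, t n) (_ : ∀ n, EMetric.diam (t n) ≤ R),
        ∑' n, ⨆ _ : (t n).Nonempty, EMetric.diam (t n) ^ s) 1 zero_lt_one
  have hlt1 : (⨅ (t : ℕ → Set ℝ) (_ : A ⊆ ⋃ n, t n) (_ : ∀ n, EMetric.diam (t n) ≤ 1),
      ∑' n, ⨆ _ : (t n).Nonempty, EMetric.diam (t n) ^ s) < c1 := h1 ▸ hc10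
  obtain ⟨t, ht⟩ := iInf_lt_iff.mp hlt1
  have hcovA : A ⊆ ⋃ n, t n := by
    by_contra hp
    rw [iInf_neg hp] at ht
    exact not_top_lt ht
  rw [iInf_pos hcovA] at ht
  have hdiam1 : ∀ n, EMetric.diam (t n) ≤ 1 := by
    by_contra hp
    rw [iInf_neg hp] at ht
    exact not_top_lt ht
  rw [iInf_pos hdiam1] at ht
  have hsum' : ∑' n, EMetric.diam (t n) ^ s ≤ c1 := by
    refine le_trans (ENNReal.tsum_le_tsum fun n => ?_) ht.le
    by_cases hne : (t n).Nonempty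
    · exact le_iSup (fun _ : (t n).Nonempty => EMetric.diam (t n) ^ s) hne
    · rw [not_nonempty_iff_eq_empty.mp hne]
      simp [EMetric.diam, hs0, ENNReal.zero_rpow_of_pos hs0]
  have hdtop : ∀ n, EMetric.diam (t n) ≤ ENNReal.ofReal (2⁻¹:ℝ) := by
    intro n
    have h2 : EMetric.diam (t n) ^ s ≤ (ENNReal.ofReal (2⁻¹:ℝ)) ^ s := by
      refine le_trans (le_trans (ENNReal.le_tsum n) hsum') ?_
      rw [ENNReal.ofReal_rpow_of_pos (by norm_num)]
      exact min_le_right _ _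
    exact (ENNReal.rpow_le_rpow_iff hs0).mp h2
  set dn : ℕ → ℝ := fun n => (EMetric.diam (t n)).toReal with hdndef
  have hdn0 : ∀ n, 0 ≤ dn n := fun n => ENNReal.toReal_nonneg
  have hdiam_eq : ∀ n, EMetric.diam (t n) = ENNReal.ofReal (dn n) := fun n =>
    (ENNReal.ofReal_toReal ((hdtop n).trans_lt ENNReal.ofReal_lt_top).ne).symm
  have hdn_half : ∀ n, dn n ≤ 2⁻¹ := by
    intro n
    have := hdtop n
    rw [hdiam_eq n, ENNReal.ofReal_le_ofReal_iff (by norm_num)] at this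
    exact this
  -- the sizes
  set g : ℕ → ℝ := fun n => min 2⁻¹ ((cr/(8*C) * 2⁻¹ ^ n) ^ s⁻¹) with hgdef
  have hg0 : ∀ n, 0 < g n := fun n =>
    lt_min (by norm_num) (Real.rpow_pos_of_pos (by positivity) _)
  have hg_half : ∀ n, g n ≤ 2⁻¹ := fun n => min_le_left _ _
  have hgs : ∀ n, g n ^ s ≤ cr/(8*C) * 2⁻¹ ^ n := by
    intro n
    calc g n ^ s ≤ ((cr/(8*C) * 2⁻¹ ^ n) ^ s⁻¹) ^ s :=
          Real.rpow_le_rpow (hg0 n).le (min_le_right _ _) hs0.le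
      _ = cr/(8*C) * 2⁻¹ ^ n := Real.rpow_inv_rpow (by positivity) hs0.ne'
  set τ : ℕ → ℝ := fun n => max (dn n) (g n) with hτdef
  have hτ0 : ∀ n, 0 < τ n := fun n => lt_of_lt_of_le (hg0 n) (le_max_right _ _)
  have hτ_half : ∀ n, τ n ≤ 2⁻¹ := fun n => max_le (hdn_half n) (hg_half n)
  set δ : ℕ → ℝ := fun n => 2 * τ n with hδdef
  have hδ0 : ∀ n, 0 < δ n := fun n => by have := hτ0 n; simp only [hδdef]; linarith
  have hδ1 : ∀ n, δ n ≤ 1 := fun n => by have := hτ_half n; simp only [hδdef]; linarith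
  have hτδ : ∀ n, τ n ≤ δ n := fun n => by have := hτ0 n; simp only [hδdef]; linarith
  have hδs : ∀ n, δ n ^ s ≤ C/C2 * (dn n ^ s + cr/(8*C) * 2⁻¹ ^ n) := by
    intro n
    have hCC2 : C/C2 = 2 ^ s := by rw [hCdef]; field_simp
    rw [hCC2]
    have h1 : δ n ^ s = 2 ^ s * τ n ^ s := Real.mul_rpow (by norm_num) (hτ0 n).le
    have h2 : τ n ^ s ≤ dn n ^ s + g n ^ s := by
      rcases max_choice (dn n) (g n) with h | h <;> simp only [hτdef, h]
      · exact le_add_of_nonneg_right (Real.rpow_nonneg (hg0 n).le _)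
      · exact le_add_of_nonneg_left (Real.rpow_nonneg (hdn0 n) _)
    have h3 : τ n ^ s ≤ dn n ^ s + cr/(8*C) * 2⁻¹ ^ n := h2.trans (by linarith [hgs n])
    rw [h1]
    exact mul_le_mul_of_nonneg_left h3 (Real.rpow_nonneg (by norm_num) s)
  -- base points
  set t0 : ℕ → ℝ := fun n => if h : (t n ∩ A).Nonempty then h.choose else 0 with ht0def
  have ht0mem : ∀ n, (t n ∩ A).Nonempty → t0 n ∈ t n ∩ A := by
    intro n h
    simp only [ht0def, dif_pos h]
    exact h.choose_spec
  -- counts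
  set N : ℕ → ℕ := fun n => ⌊2*K * δ n ^ (-ε)⌋₊ + 1 with hNdef
  -- Hölder estimate over each piece
  have hKey : ∀ n, ∀ v ∈ t n ∩ A, ∀ j, |f v j - f (t0 n) j| ≤ K * δ n ^ (H - ε) := by
    intro n v hv j
    have hvne : (t n ∩ A).Nonempty := ⟨v, hv⟩
    have ht0n := ht0mem n hvne
    have hv01 : v ∈ Set.Icc (0:ℝ) 1 := hA hv.2
    have ht001 : t0 n ∈ Set.Icc (0:ℝ) 1 := hA ht0n.2
    have hdist : |v - t0 n| ≤ dn n := by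
      have h := EMetric.edist_le_diam_of_mem hv.1 ht0n.1
      rw [edist_dist, show Metric.ediam (t n) = _ from hdiam_eq n, ENNReal.ofReal_le_ofReal_iff (hdn0 n)] at h
      simpa [Real.dist_eq] using h
    have habs : |v - t0 n| ≤ δ n := hdist.trans ((le_max_left _ _).trans (hτδ n))
    have h1 : ‖f v - f (t0 n)‖ ≤ K * |v - t0 n| ^ (H - ε) := hK v hv01 (t0 n) ht001
    have h2 : |v - t0 n| ^ (H - ε) ≤ δ n ^ (H - ε) :=
      Real.rpow_le_rpow (abs_nonneg _) habs (by linarith)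
    have h3 : |f v j - f (t0 n) j| ≤ ‖f v - f (t0 n)‖ := by
      simpa using norm_le_pi_norm (f v - f (t0 n)) j
    calc |f v j - f (t0 n) j| ≤ K * |v - t0 n| ^ (H - ε) := h3.trans h1
      _ ≤ K * δ n ^ (H - ε) := mul_le_mul_of_nonneg_left h2 hK0
  -- rectangles
  set bb : ℕ → (Fin d → ℕ) → (Fin d → ℝ) :=
    fun n i j => f (t0 n) j - K * δ n ^ (H-ε) + (i j) * δ n ^ H with hbbdef
  haveI : Denumerable (ℕ × (Fin d → ℕ)) := Denumerable.ofEncodableOfInfinite _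
  set e : ℕ ≃ ℕ × (Fin d → ℕ) := (Denumerable.eqv (ℕ × (Fin d → ℕ))).symm with hedef
  set p : ℕ → ℝ := fun m => min 1 ((cr/8 * 2⁻¹ ^ m) ^ β⁻¹) with hpdef
  have hp0 : ∀ m, 0 < p m := fun m =>
    lt_min one_pos (Real.rpow_pos_of_pos (by positivity) _)
  have hpβ : ∀ m, p m ^ β ≤ cr/8 * 2⁻¹ ^ m := by
    intro m
    calc p m ^ β ≤ ((cr/8 * 2⁻¹ ^ m) ^ β⁻¹) ^ β :=
          Real.rpow_le_rpow (hp0 m).le (min_le_right _ _) hβ0.le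
      _ = cr/8 * 2⁻¹ ^ m := Real.rpow_inv_rpow (by positivity) hβ0.ne'
  set P : ℕ × (Fin d → ℕ) → Prop := fun q => (t q.1 ∩ A).Nonempty ∧ ∀ j, q.2 j < N q.1
    with hPdef
  set r : ℕ → ℝ × (Fin d → ℝ) × ℝ := fun m =>
    if P (e m) then (t0 (e m).1 - τ (e m).1, bb (e m).1 (e m).2, δ (e m).1)
    else (0, 0, p m) with hrdef
  have hrpos : ∀ m, 0 < (r m).2.2 := by
    intro m
    simp only [hrdef]
    split
    · exact hδ0 _
    · exact hp0 m
  -- the cover property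
  have hrcov : ((fun u => (u, f u)) '' A) ⊆
      ⋃ m, parRect d H (r m).1 (r m).2.1 (r m).2.2 := by
    rintro x ⟨u, hu, rfl⟩
    dsimp only
    obtain ⟨n, hun⟩ := mem_iUnion.mp (hcovA hu)
    have hne : (t n ∩ A).Nonempty := ⟨u, hun, hu⟩
    have hu' : u ∈ t n ∩ A := ⟨hun, hu⟩
    have hδH : (0:ℝ) < δ n ^ H := Real.rpow_pos_of_pos (hδ0 n) H
    set y : Fin d → ℝ := fun j => f u j - (f (t0 n) j - K * δ n ^ (H - ε)) with hydef
    have hy0 : ∀ j, 0 ≤ y j := by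
      intro j
      have := (abs_le.mp (hKey n u hu' j)).1
      simp only [hydef]; linarith
    have hy2 : ∀ j, y j ≤ 2 * (K * δ n ^ (H - ε)) := by
      intro j
      have := (abs_le.mp (hKey n u hu' j)).2
      simp only [hydef]; linarith
    set i : Fin d → ℕ := fun j => ⌊y j / δ n ^ H⌋₊ with hidef
    have hdivid : 2*K * δ n ^ (H-ε) / δ n ^ H = 2*K * δ n ^ (-ε) := by
      rw [Real.rpow_sub (hδ0 n), Real.rpow_neg (hδ0 n).le]
      field_simp
    have hiN : ∀ j, i j < N n := by
      intro j
      have hle : y j / δ n ^ H ≤ 2*K * δ n ^ (-ε) := by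
        rw [← hdivid]
        exact (div_le_div_iff_of_pos_right hδH).mpr (by linarith [hy2 j])
      have := Nat.floor_le_floor hle
      simp only [hidef]
      exact Nat.lt_succ_of_le this
    have hPq : P (n, i) := ⟨hne, hiN⟩
    refine mem_iUnion.mpr ⟨e.symm (n, i), ?_⟩
    have hem : e (e.symm (n, i)) = (n, i) := e.apply_symm_apply _
    have hrm : r (e.symm (n, i)) = (t0 n - τ n, bb n i, δ n) := by
      simp only [hrdef, hem, if_pos hPq]
    rw [hrm]
    have hdist : |u - t0 n| ≤ τ n := by
      have ht0n := ht0mem n hne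
      have h := EMetric.edist_le_diam_of_mem hun ht0n.1
      rw [edist_dist, show Metric.ediam (t n) = _ from hdiam_eq n, ENNReal.ofReal_le_ofReal_iff (hdn0 n)] at h
      have : |u - t0 n| ≤ dn n := by simpa [Real.dist_eq] using h
      exact this.trans (le_max_left _ _)
    obtain ⟨ha1, ha2⟩ := abs_le.mp hdist
    refine Set.mem_prod.mpr ⟨?_, ?_⟩
    · -- time coordinate
      rw [Set.mem_Icc]
      dsimp only
      have hδn : δ n = 2 * τ n := rfl
      refine ⟨by linarith, ?_⟩
      linarith
    · -- space coordinates
      refine Set.mem_univ_pi.mpr fun j => ?_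
      dsimp only
      have hfl : (i j : ℝ) * δ n ^ H ≤ y j := by
        have h := Nat.floor_le (div_nonneg (hy0 j) hδH.le)
        calc (i j : ℝ) * δ n ^ H ≤ (y j / δ n ^ H) * δ n ^ H :=
              mul_le_mul_of_nonneg_right h hδH.le
          _ = y j := by field_simp
      have hfu : y j < ((i j : ℝ) + 1) * δ n ^ H := by
        have h := Nat.lt_floor_add_one (y j / δ n ^ H)
        calc y j = (y j / δ n ^ H) * δ n ^ H := by field_simp
          _ < ((i j : ℝ) + 1) * δ n ^ H := by
              exact mul_lt_mul_of_pos_right h hδH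
      constructor
      · simp only [hbbdef, hydef] at *; linarith
      · simp only [hbbdef, hydef] at *; nlinarith
  -- the sum bound
  set w : ℕ × (Fin d → ℕ) → ℝ≥0∞ :=
    fun q => if P q then ENNReal.ofReal (δ q.1 ^ β) else 0 with hwdef
  have hpoint : ∀ m, ENNReal.ofReal ((r m).2.2 ^ β)
      ≤ ENNReal.ofReal (p m ^ β) + w (e m) := by
    intro m
    by_cases hm : P (e m)
    · simp only [hrdef, hwdef, if_pos hm]
      exact le_add_self
    · simp only [hrdef, hwdef, if_neg hm]
      exact le_add_of_nonneg_right (zero_le)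
  have hwsum : ∑' (q : ℕ × (Fin d → ℕ)), w q
      ≤ ENNReal.ofReal (cr/4) + ENNReal.ofReal (cr/4) := by
    rw [ENNReal.tsum_prod']
    have hinner : ∀ n, ∑' (i : Fin d → ℕ), w (n, i)
        ≤ ((N n)^d : ℕ) * ENNReal.ofReal (δ n ^ β) := by
      intro n
      rw [tsum_eq_sum (s := Fintype.piFinset fun _ : Fin d => Finset.range (N n))
        (fun i hi => by
          simp only [hwdef]
          refine if_neg fun hPi => hi ?_
          simpa [Fintype.mem_piFinset] using hPi.2)]
      calc ∑ i ∈ Fintype.piFinset fun _ : Fin d => Finset.range (N n), w (n, i)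
          ≤ ∑ _i ∈ Fintype.piFinset fun _ : Fin d => Finset.range (N n),
            ENNReal.ofReal (δ n ^ β) :=
            Finset.sum_le_sum fun i _ => by simp only [hwdef]; split <;> simp
        _ = ((N n)^d : ℕ) * ENNReal.ofReal (δ n ^ β) := by
            rw [Finset.sum_const, Fintype.card_piFinset]
            simp [nsmul_eq_mul]
    have hreal : ∀ n, ((N n : ℝ))^d * δ n ^ β ≤ C * dn n ^ s + cr/8 * 2⁻¹ ^ n := by
      intro n
      have hδεpos : (0:ℝ) < δ n ^ (-ε) := Real.rpow_pos_of_pos (hδ0 n) _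
      have hδε1 : (1:ℝ) ≤ δ n ^ (-ε) :=
        Real.one_le_rpow_of_pos_of_le_one_of_nonpos (hδ0 n) (hδ1 n) (by linarith)
      have hNle : (N n : ℝ) ≤ (2*K+1) * δ n ^ (-ε) := by
        have h1 : ((⌊2*K * δ n ^ (-ε)⌋₊ : ℝ)) ≤ 2*K * δ n ^ (-ε) :=
          Nat.floor_le (mul_nonneg (by linarith) hδεpos.le)
        have : (N n : ℝ) = (⌊2*K * δ n ^ (-ε)⌋₊ : ℝ) + 1 := by
          have : N n = ⌊2*K * δ n ^ (-ε)⌋₊ + 1 := rfl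
          rw [this]; push_cast; ring
        rw [this]
        nlinarith
      have hN0 : (0:ℝ) ≤ (N n : ℝ) := Nat.cast_nonneg _
      have hpow : ((N n : ℝ))^d ≤ (2*K+1)^d * (δ n ^ (-ε))^d := by
        calc ((N n : ℝ))^d ≤ ((2*K+1) * δ n ^ (-ε))^d :=
              pow_le_pow_left₀ hN0 hNle d
          _ = (2*K+1)^d * (δ n ^ (-ε))^d := mul_pow _ _ _
      have hexp : (δ n ^ (-ε))^d * δ n ^ β = δ n ^ (β - ε * d) := by
        rw [← Real.rpow_natCast (δ n ^ (-ε)) d, ← Real.rpow_mul (hδ0 n).le,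
          ← Real.rpow_add (hδ0 n)]
        ring_nf
      have h5 : ((N n : ℝ))^d * δ n ^ β ≤ C2 * δ n ^ (β - ε * d) := by
        rw [← hexp, hC2def]
        have hδβ : (0:ℝ) ≤ δ n ^ β := Real.rpow_nonneg (hδ0 n).le β
        calc ((N n : ℝ))^d * δ n ^ β ≤ ((2*K+1)^d * (δ n ^ (-ε))^d) * δ n ^ β :=
              mul_le_mul_of_nonneg_right hpow hδβ
          _ = (2*K+1)^d * ((δ n ^ (-ε))^d * δ n ^ β) := by ring
      have h6 : δ n ^ (β - ε * d) ≤ δ n ^ s :=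
        Real.rpow_le_rpow_of_exponent_ge (hδ0 n) (hδ1 n) (by nlinarith [hdε])
      have h7 : ((N n : ℝ))^d * δ n ^ β ≤ C2 * δ n ^ s := by
        calc ((N n : ℝ))^d * δ n ^ β ≤ C2 * δ n ^ (β - ε * d) := h5
          _ ≤ C2 * δ n ^ s := mul_le_mul_of_nonneg_left h6 hC2pos.le
      calc ((N n : ℝ))^d * δ n ^ β ≤ C2 * δ n ^ s := h7
        _ ≤ C2 * (C/C2 * (dn n ^ s + cr/(8*C) * 2⁻¹ ^ n)) :=
            mul_le_mul_of_nonneg_left (hδs n) hC2pos.le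
        _ = C * dn n ^ s + cr/8 * 2⁻¹ ^ n := by
            field_simp
    have henn : ∀ n, (((N n)^d : ℕ) : ℝ≥0∞) * ENNReal.ofReal (δ n ^ β)
        ≤ ENNReal.ofReal (C * dn n ^ s) + ENNReal.ofReal (cr/8 * 2⁻¹ ^ n) := by
      intro n
      have h1 : (((N n)^d : ℕ) : ℝ≥0∞) * ENNReal.ofReal (δ n ^ β)
          = ENNReal.ofReal (((N n : ℝ))^d * δ n ^ β) := by
        rw [ENNReal.ofReal_mul (by positivity), ← ENNReal.ofReal_natCast ((N n)^d)]
        push_cast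
        ring_nf
      rw [h1]
      refine le_trans (ENNReal.ofReal_le_ofReal (hreal n)) ENNReal.ofReal_add_le
    calc ∑' (n : ℕ), ∑' (i : Fin d → ℕ), w (n, i)
        ≤ ∑' (n : ℕ), (ENNReal.ofReal (C * dn n ^ s) + ENNReal.ofReal (cr/8 * 2⁻¹ ^ n)) :=
          ENNReal.tsum_le_tsum fun n => ((hinner n).trans (henn n))
      _ = (∑' (n : ℕ), ENNReal.ofReal (C * dn n ^ s))
          + ∑' (n : ℕ), ENNReal.ofReal (cr/8 * 2⁻¹ ^ n) := ENNReal.tsum_add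
      _ ≤ ENNReal.ofReal (cr/4) + ENNReal.ofReal (cr/4) := by
          refine add_le_add ?_ ?_
          · have hterm : ∀ n, ENNReal.ofReal (C * dn n ^ s)
                = ENNReal.ofReal C * EMetric.diam (t n) ^ s := by
              intro n
              rw [ENNReal.ofReal_mul hCpos.le, hdiam_eq n,
                ENNReal.ofReal_rpow_of_nonneg (hdn0 n) hs0.le]
            rw [tsum_congr hterm, ENNReal.tsum_mul_left]
            calc ENNReal.ofReal C * ∑' n, EMetric.diam (t n) ^ s
                ≤ ENNReal.ofReal C * ENNReal.ofReal (cr/(4*C)) := by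
                  exact mul_le_mul_right (hsum'.trans (min_le_left _ _)) _
              _ = ENNReal.ofReal (cr/4) := by
                  rw [← ENNReal.ofReal_mul hCpos.le]
                  congr 1
                  field_simp
          · refine le_trans (geo_aux _ (by positivity)) ?_
            refine ENNReal.ofReal_le_ofReal ?_
            linarith
  -- conclude
  have hsum_total : ∑' m, ENNReal.ofReal ((r m).2.2 ^ β) ≤ (c : ℝ≥0∞) := by
    calc ∑' m, ENNReal.ofReal ((r m).2.2 ^ β)
        ≤ ∑' m, (ENNReal.ofReal (p m ^ β) + w (e m)) := ENNReal.tsum_le_tsum hpoint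
      _ = (∑' m, ENNReal.ofReal (p m ^ β)) + ∑' m, w (e m) := ENNReal.tsum_add
      _ ≤ ENNReal.ofReal (cr/4)
          + (ENNReal.ofReal (cr/4) + ENNReal.ofReal (cr/4)) := by
          refine add_le_add ?_ ?_
          · refine le_trans (ENNReal.tsum_le_tsum fun m =>
              ENNReal.ofReal_le_ofReal (hpβ m)) ?_
            refine le_trans (geo_aux _ (by positivity)) ?_
            exact ENNReal.ofReal_le_ofReal (by linarith)
          · rw [e.tsum_eq w]
            exact hwsum
      _ ≤ (c : ℝ≥0∞) := by
          rw [← ENNReal.ofReal_add (by positivity) (by positivity),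
            ← ENNReal.ofReal_add (by positivity) (by positivity),
            ← ENNReal.ofReal_coe_nnreal]
          exact ENNReal.ofReal_le_ofReal (by simp only [← hcrdef]; linarith)
  refine le_trans (iInf₂_le_of_le r hrpos ?_) hsum_total
  exact iInf_le _ hrcov
/-- For `H ∈ (0,1)`, a Borel set `A ⊆ [0,1]` and `f : [0,1] → ℝ^d` which is
`(H-ε)`-Hölder continuous for every `ε ∈ (0,H)`: `dim(A) = dim_{Ψ,H}(Gr_A(f))`. -/
theorem dimH_eq_parDim_graph_of_holder (d : ℕ) (H : ℝ) (hH : H ∈ Set.Ioo (0:ℝ) 1)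
    (A : Set ℝ) (hAm : MeasurableSet A) (hA : A ⊆ Set.Icc 0 1)
    (f : ℝ → Fin d → ℝ)
    (hf : ∀ ε ∈ Set.Ioo (0:ℝ) H, ∃ K : ℝ, 0 ≤ K ∧
      ∀ x ∈ Set.Icc (0:ℝ) 1, ∀ y ∈ Set.Icc (0:ℝ) 1, ‖f x - f y‖ ≤ K * |x - y| ^ (H - ε)) :
    (dimH A).toReal = parDim d H ((fun t => (t, f t)) '' A) := by
  have hDfin : dimH A ≠ ⊤ := by
    have h1 : dimH A ≤ dimH (Set.univ : Set ℝ) := dimH_mono (Set.subset_univ A)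
    rw [Real.dimH_univ] at h1
    exact (h1.trans_lt ENNReal.one_lt_top).ne
  set D := (dimH A).toReal with hD
  set S := {β : ℝ | 0 ≤ β ∧ parContent d H β ((fun t => (t, f t)) '' A) = 0} with hS
  have hlow : ∀ b ∈ S, D ≤ b := by
    rintro b ⟨hb0, hbc⟩
    have hbpos : 0 < b := by
      rcases hb0.lt_or_eq with h | h
      · exact h
      · exfalso
        rw [← h, parContent_zero_exp] at hbc
        exact ENNReal.top_ne_zero hbc
    have hle := aux_lower d H A f hbpos hbc
    calc D ≤ (ENNReal.ofReal b).toReal := ENNReal.toReal_mono ENNReal.ofReal_ne_top hle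
      _ = b := ENNReal.toReal_ofReal hb0
  have hmem : ∀ b : ℝ, D < b → b ∈ S := fun b hb =>
    ⟨le_trans ENNReal.toReal_nonneg hb.le, aux_upper d H hH A hA f hf hb hDfin⟩
  have hne : S.Nonempty := ⟨D + 1, hmem _ (lt_add_one D)⟩
  have hbdd : BddBelow S := ⟨D, hlow⟩
  show D = sInf S
  refine le_antisymm (le_csInf hne hlow) ?_
  by_contra hcon
  push_neg at hcon
  have h1 : (D + sInf S)/2 ∈ S := hmem _ (by linarith)
  have h2 := csInf_le hbdd h1
  linarith
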